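/- arXiv:1212.4482 — 2 statements merged into one kernel-verified Lean document; each statement's English description precedes it below -/
import Mathlib

section
/- Let j : ℝ → ℝ be differentiable with ν * j(t) ≤ j'(t) * t for all |t| > M, where ν > 0 and M > 0. Then for all t with |t| > M, j(t) ≥ l * |t|^ν where l = min(j(M), j(-M)) / M^ν. -/
open Real

lemma aux_mono (f : ℝ → ℝ) (hf : Differentiable ℝ f) (ν M : ℝ) (hν : 0 < ν) (hM : 0 < M)
    (h : ∀ s : ℝ, M < s → ν * f s ≤ deriv f s * s) :
    ∀ t : ℝ, M < t → f M * M ^ (-ν) * t ^ ν ≤ f t := by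
  set g : ℝ → ℝ := fun s => f s * s ^ (-ν) with hg
  have hd : ∀ x : ℝ, 0 < x → HasDerivAt g
      (deriv f x * x ^ (-ν) + f x * (-ν * x ^ (-ν - 1))) x := by
    intro x hx
    exact (hf.differentiableAt.hasDerivAt).mul
      (Real.hasDerivAt_rpow_const (Or.inl hx.ne'))
  have hmono : MonotoneOn g (Set.Ici M) := by
    apply monotoneOn_of_deriv_nonneg (convex_Ici M)
    · intro s hs
      have hs0 : 0 < s := hM.trans_le hs
      exact ((hd s hs0).continuousAt).continuousWithinAt
    · intro s hs
      rw [interior_Ici] at hs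
      exact ((hd s (hM.trans hs)).differentiableAt).differentiableWithinAt
    · intro s hs
      rw [interior_Ici] at hs
      have hs0 : 0 < s := hM.trans hs
      rw [(hd s hs0).deriv]
      have key : ν * f s ≤ deriv f s * s := h s hs
      have hpow : (0:ℝ) < s ^ (-ν - 1) := Real.rpow_pos_of_pos hs0 _
      have hsplit : s ^ (-ν) = s ^ (-ν - 1) * s := by
        rw [← Real.rpow_add_one hs0.ne' (-ν - 1)]; ring_nf
      rw [hsplit]
      have : deriv f s * (s ^ (-ν - 1) * s) + f s * (-ν * s ^ (-ν - 1))
          = s ^ (-ν - 1) * (deriv f s * s - ν * f s) := by ring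
      rw [this]
      exact mul_nonneg hpow.le (by linarith)
  intro t ht
  have hgle : g M ≤ g t := hmono (Set.self_mem_Ici) (le_of_lt ht) (le_of_lt ht)
  have ht0 : 0 < t := hM.trans ht
  have htν : (0:ℝ) < t ^ ν := Real.rpow_pos_of_pos ht0 _
  have := mul_le_mul_of_nonneg_right hgle htν.le
  simp only [hg] at this
  calc f M * M ^ (-ν) * t ^ ν = f M * M ^ (-ν) * t ^ ν := rfl
    _ ≤ f t * t ^ (-ν) * t ^ ν := this
    _ = f t := by
        rw [mul_assoc, ← Real.rpow_add ht0]
        simp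

theorem stmt_1 (j : ℝ → ℝ) (hj : Differentiable ℝ j) (ν M : ℝ) (hν : 0 < ν) (hM : 0 < M)
    (hAR : ∀ t : ℝ, M < |t| → ν * j t ≤ deriv j t * t) :
    ∀ t : ℝ, M < |t| → j t ≥ (min (j M) (j (-M)) / M ^ ν) * |t| ^ ν := by
  have hMν : (0:ℝ) < M ^ ν := Real.rpow_pos_of_pos hM _
  have hdiv : ∀ c : ℝ, c / M ^ ν = c * M ^ (-ν) := by
    intro c
    rw [Real.rpow_neg hM.le, div_eq_mul_inv]
  intro t ht
  rcases le_or_gt t 0 with htneg | htpos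
  · -- t < -M
    have habs : |t| = -t := abs_of_nonpos htneg
    rw [habs] at ht ⊢
    set f : ℝ → ℝ := fun s => j (-s) with hf
    have hfd : Differentiable ℝ f := hj.comp (differentiable_neg)
    have hderiv : ∀ s : ℝ, deriv f s = -deriv j (-s) := by
      intro s
      have : HasDerivAt f (deriv j (-s) * (-1)) s :=
        (hj.differentiableAt.hasDerivAt).comp s (hasDerivAt_neg s)
      rw [this.deriv]; ring
    have key : ∀ s : ℝ, M < s → ν * f s ≤ deriv f s * s := by
      intro s hs
      rw [hderiv]
      have habs' : M < |(-s)| := by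
        rw [abs_neg, abs_of_pos (hM.trans hs)]; exact hs
      have := hAR (-s) habs'
      simpa [hf] using by linarith [hAR (-s) habs']
    have := aux_mono f hfd ν M hν hM key (-t) ht
    simp only [hf, neg_neg] at this
    have hmin : min (j M) (j (-M)) ≤ j (-M) := min_le_right _ _
    have htν : (0:ℝ) < (-t) ^ ν := Real.rpow_pos_of_pos (hM.trans ht) _
    have hMneg : (0:ℝ) < M ^ (-ν) := Real.rpow_pos_of_pos hM _
    calc (min (j M) (j (-M)) / M ^ ν) * (-t) ^ ν
        = min (j M) (j (-M)) * M ^ (-ν) * (-t) ^ ν := by rw [hdiv]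
      _ ≤ j (-M) * M ^ (-ν) * (-t) ^ ν := by
          apply mul_le_mul_of_nonneg_right _ htν.le
          exact mul_le_mul_of_nonneg_right hmin hMneg.le
      _ ≤ j t := this
  · -- t > M
    have habs : |t| = t := abs_of_pos htpos
    rw [habs] at ht ⊢
    have key : ∀ s : ℝ, M < s → ν * j s ≤ deriv j s * s := by
      intro s hs
      exact hAR s (by rw [abs_of_pos (hM.trans hs)]; exact hs)
    have := aux_mono j hj ν M hν hM key t ht
    have hmin : min (j M) (j (-M)) ≤ j M := min_le_left _ _
    have htν : (0:ℝ) < t ^ ν := Real.rpow_pos_of_pos (hM.trans ht) _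
    have hMneg : (0:ℝ) < M ^ (-ν) := Real.rpow_pos_of_pos hM _
    calc (min (j M) (j (-M)) / M ^ ν) * t ^ ν
        = min (j M) (j (-M)) * M ^ (-ν) * t ^ ν := by rw [hdiv]
      _ ≤ j M * M ^ (-ν) * t ^ ν := by
          apply mul_le_mul_of_nonneg_right _ htν.le
          exact mul_le_mul_of_nonneg_right hmin hMneg.le
      _ ≤ j t := this
end

section
/- Suppose j : ℝ → ℝ satisfies: (i) limsup_{t→0} j(t)/|t|^p ≤ −μ for some μ > 0 and p > 1, and (ii) |j(t)| ≤ a*|t| + c*|t|^r for all t, with a, c > 0 and r > p. Then there exists γ > 0 and θ with p < θ ≤ r such that j(t) ≤ −(μ/2)*|t|^p + γ*|t|^θ for all t ∈ ℝ. -/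
open Filter

theorem stmt_3 (j : ℝ → ℝ) (μ p r a c : ℝ) (hμ : 0 < μ) (hp : 1 < p) (hr : p < r)
    (ha : 0 < a) (hc : 0 < c)
    (hlimsup : Filter.limsup (fun t : ℝ => j t / |t| ^ p) (nhdsWithin 0 {(0 : ℝ)}ᶜ) ≤ -μ)
    (hgrowth : ∀ t : ℝ, |j t| ≤ a * |t| + c * |t| ^ r) :
    ∃ γ : ℝ, 0 < γ ∧ ∃ θ : ℝ, p < θ ∧ θ ≤ r ∧
      ∀ t : ℝ, j t ≤ -(μ / 2) * |t| ^ p + γ * |t| ^ θ := by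
  set u : ℝ → ℝ := fun t : ℝ => j t / |t| ^ p with hu
  set F := nhdsWithin (0:ℝ) {(0 : ℝ)}ᶜ with hF
  -- boundedness above
  have hbdd : F.IsBoundedUnder (· ≤ ·) u := by
    by_contra hb
    have hempty : {b : ℝ | ∀ᶠ t in F, u t ≤ b} = ∅ := by
      ext b
      simp only [Set.mem_setOf_eq, Set.mem_empty_iff_false, iff_false]
      intro hbd
      exact hb ⟨b, hbd⟩
    have : limsup u F = 0 := by
      rw [limsup_eq, hempty, Real.sInf_empty]
    rw [this] at hlimsup
    linarith
  have hlt : ∀ᶠ t in F, u t < -(μ/2) :=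
    eventually_lt_of_limsup_lt (lt_of_le_of_lt hlimsup (by linarith)) hbdd
  rw [hF, Filter.eventually_iff, Metric.mem_nhdsWithin_iff] at hlt
  obtain ⟨δ, hδ, hsmall⟩ := hlt
  have hδr : (0:ℝ) < δ := hδ
  refine ⟨a * δ ^ (1 - r) + c + (μ/2) * δ ^ (p - r) + 1, by positivity, r, hr, le_refl r, ?_⟩
  intro t
  rcases eq_or_ne t 0 with rfl | ht0
  · have h0 := hgrowth 0
    simp only [abs_zero] at h0 ⊢
    rw [Real.zero_rpow (by linarith : r ≠ 0), Real.zero_rpow (by linarith : p ≠ 0)] at *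
    have : |j 0| ≤ 0 := by linarith
    have := abs_nonneg (j 0)
    have hj0 : j 0 = 0 := by
      have := abs_eq_zero.mp (le_antisymm ‹|j 0| ≤ 0› (abs_nonneg _))
      exact this
    rw [hj0]; ring_nf; simp
  · have htpos : (0:ℝ) < |t| := abs_pos.mpr ht0
    rcases lt_or_ge (dist t 0) δ with hcase | hcase
    · have := hsmall ⟨Metric.mem_ball.mpr hcase, ht0⟩
      have hupow : (0:ℝ) < |t| ^ p := Real.rpow_pos_of_pos htpos p
      have hj : j t < -(μ/2) * |t| ^ p := by
        have := (div_lt_iff₀ hupow).mp this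
        linarith
      have hnn : (0:ℝ) ≤ (a * δ ^ (1 - r) + c + (μ/2) * δ ^ (p - r) + 1) * |t| ^ r := by
        positivity
      linarith
    · have hdt : δ ≤ |t| := by rwa [Real.dist_eq, sub_zero] at hcase
      -- |t|^(1-r) ≤ δ^(1-r), |t|^(p-r) ≤ δ^(p-r)
      have h1 : |t| ^ (1 - r) ≤ δ ^ (1 - r) :=
        Real.rpow_le_rpow_of_nonpos hδr hdt (by linarith)
      have h2 : |t| ^ (p - r) ≤ δ ^ (p - r) :=
        Real.rpow_le_rpow_of_nonpos hδr hdt (by linarith)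
      have htr : (0:ℝ) < |t| ^ r := Real.rpow_pos_of_pos htpos r
      have e1 : |t| ^ r * |t| ^ (1 - r) = |t| := by
        rw [← Real.rpow_add htpos]; norm_num
      have e2 : |t| ^ r * |t| ^ (p - r) = |t| ^ p := by
        rw [← Real.rpow_add htpos]; ring_nf
      have hb1 : a * |t| ≤ a * δ ^ (1 - r) * |t| ^ r := by
        have h := mul_le_mul_of_nonneg_left h1 (mul_nonneg ha.le htr.le)
        nlinarith [e1]
      have hb2 : (μ/2) * |t| ^ p ≤ (μ/2) * δ ^ (p - r) * |t| ^ r := by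
        have h := mul_le_mul_of_nonneg_left h2 (mul_nonneg (by linarith : (0:ℝ) ≤ μ/2) htr.le)
        nlinarith [e2]
      have hg := hgrowth t
      have habs : j t ≤ a * |t| + c * |t| ^ r := le_trans (le_abs_self _) hg
      nlinarith [htr.le]
end
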